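/- For any signed graph (G,Y), any K with 0 ≤ K ≤ |E|, and any active learning algorithm that queries at most a fraction α ∈ [0,1] of the edges of G and then predicts the remaining edges, there is a randomized labeling Y with Δ₂(Y) ≤ K (always) such that the expected number of mistakes on the unqueried edges is at least (1−α)·K/2. -/

import Mathlib

open scoped Classical

lemma flip_count {W : Type*} [Fintype W] [DecidableEq W] (e : W) (g : (W → Bool) → Bool)
    (hg : ∀ ε : W → Bool, g (Function.update ε e (!(ε e))) = g ε) :
    2 * (Finset.univ.filter fun ε : W → Bool => g ε ≠ ε e).card
      = Fintype.card (W → Bool) := by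
  have hinv : ∀ ε : W → Bool,
      Function.update (Function.update ε e (!(ε e))) e
        (!(Function.update ε e (!(ε e)) e)) = ε := by
    intro ε
    simp [Function.update_idem]
  have key : (Finset.univ.filter fun ε : W → Bool => g ε ≠ ε e).card
      = (Finset.univ.filter fun ε : W → Bool => ¬ (g ε ≠ ε e)).card := by
    refine Finset.card_nbij' (fun ε => Function.update ε e (!(ε e)))
      (fun ε => Function.update ε e (!(ε e))) ?_ ?_ ?_ ?_
    · intro ε hε
      simp only [Finset.mem_coe, Finset.mem_filter, Finset.mem_univ, true_and, ne_eq, not_not] at hε ⊢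
      rw [hg, Function.update_self]
      revert hε; cases g ε <;> cases ε e <;> simp
    · intro ε hε
      simp only [Finset.mem_coe, Finset.mem_filter, Finset.mem_univ, true_and, ne_eq, not_not] at hε ⊢
      rw [hg, Function.update_self]
      revert hε; cases g ε <;> cases ε e <;> simp
    · intro ε _; exact hinv ε
    · intro ε _; exact hinv ε
  have hsplit := Finset.card_filter_add_card_filter_not
    (s := (Finset.univ : Finset (W → Bool))) (p := fun ε => g ε ≠ ε e)
  rw [Finset.card_univ] at hsplit
  rw [two_mul]; nth_rewrite 2 [key]
  exact hsplit

lemma count_contain {W : Type*} [DecidableEq W] (E : Finset W) (e : W) (he : e ∈ E) (k : ℕ) :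
    ((E.powersetCard (k+1)).filter fun F => e ∈ F).card = (E.card - 1).choose k := by
  rw [← Finset.card_erase_of_mem he, ← Finset.card_powersetCard]
  refine Finset.card_nbij' (fun F => F.erase e) (fun S => insert e S) ?_ ?_ ?_ ?_
  · intro F hF
    simp only [Finset.mem_coe, Finset.mem_filter, Finset.mem_powersetCard] at hF
    rw [Finset.mem_coe, Finset.mem_powersetCard]
    exact ⟨Finset.erase_subset_erase e hF.1.1,
      by rw [Finset.card_erase_of_mem hF.2, hF.1.2, Nat.add_sub_cancel]⟩
  · intro S hS
    rw [Finset.mem_coe, Finset.mem_powersetCard] at hS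
    have heS : e ∉ S := fun h => (Finset.mem_erase.mp (hS.1 h)).1 rfl
    simp only [Finset.mem_coe, Finset.mem_filter, Finset.mem_powersetCard]
    refine ⟨⟨?_, ?_⟩, Finset.mem_insert_self e S⟩
    · intro x hx
      rcases Finset.mem_insert.mp hx with h | h
      · exact h ▸ he
      · exact Finset.mem_of_mem_erase (hS.1 h)
    · rw [Finset.card_insert_of_notMem heS, hS.2]
  · intro F hF
    simp only [Finset.mem_coe, Finset.mem_filter] at hF
    exact Finset.insert_erase hF.2
  · intro S hS
    rw [Finset.mem_coe, Finset.mem_powersetCard] at hS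
    exact Finset.erase_insert fun h => (Finset.mem_erase.mp (hS.1 h)).1 rfl

/-- Cost of a clustering `f` for a Boolean edge labeling (`true` = +1, `false` = −1). -/
noncomputable def clusterCostB {V : Type*} [Fintype V] {β : Type*}
    (G : SimpleGraph V) (Y : Sym2 V → Bool) (f : V → β) : ℕ :=
  (G.edgeFinset.filter fun e =>
    (Y e = false ∧ Sym2.lift ⟨fun u v => f u = f v, fun _ _ => propext eq_comm⟩ e) ∨
    (Y e = true ∧ ¬ Sym2.lift ⟨fun u v => f u = f v, fun _ _ => propext eq_comm⟩ e)).card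

/-- Two-cluster correlation clustering index Δ₂(Y) for Boolean labelings. -/
noncomputable def ccIndex2B {V : Type*} [Fintype V] (G : SimpleGraph V) (Y : Sym2 V → Bool) : ℕ :=
  sInf {c | ∃ f : V → Bool, clusterCostB G Y f = c}

/-- Active-learning lower bound. The randomized labeling: a uniform `K`-subset `F` of the
edges gets independent uniform ±1 labels, all other edges are `+1`. Every realization has
`Δ₂ ≤ K`, and any algorithm querying a set `Q` with `|Q| ≤ α|E|` (and whose predictions
depend only on the labels of `Q`) makes at least `(1−α)K/2` expected mistakes on `E∖Q`. -/
theorem stmt18 {V : Type*} [Fintype V] (G : SimpleGraph V)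
    (K : ℕ) (hK : K ≤ G.edgeFinset.card)
    (α : ℝ) (hα0 : 0 ≤ α) (hα1 : α ≤ 1)
    (Q : Finset (Sym2 V)) (hQ : Q ⊆ G.edgeFinset)
    (hQcard : (Q.card : ℝ) ≤ α * G.edgeFinset.card)
    (A : (Sym2 V → Bool) → Sym2 V → Bool)
    (hA : ∀ Y₁ Y₂ : Sym2 V → Bool, (∀ e ∈ Q, Y₁ e = Y₂ e) → A Y₁ = A Y₂) :
    (∀ F ∈ G.edgeFinset.powersetCard K, ∀ ε : Sym2 V → Bool,
        ccIndex2B G (fun e => if e ∈ F then ε e else true) ≤ K) ∧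
    ((1 - α) * K / 2 ≤
      (∑ F ∈ G.edgeFinset.powersetCard K, ∑ ε : Sym2 V → Bool,
          (((G.edgeFinset \ Q).filter fun e =>
            A (fun e' => if e' ∈ F then ε e' else true) e ≠
              (if e ∈ F then ε e else true)).card : ℝ)) /
        (((G.edgeFinset.powersetCard K).card : ℝ) *
          (Fintype.card (Sym2 V → Bool) : ℝ))) := by
  constructor
  · -- Part 1: every realization has Δ₂ ≤ K via the constant clustering
    intro F hF ε
    rw [Finset.mem_powersetCard] at hF
    have hconst : clusterCostB G (fun e => if e ∈ F then ε e else true)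
        (fun _ : V => true) ≤ K := by
      unfold clusterCostB
      calc (Finset.filter _ _).card ≤ F.card := by
            apply Finset.card_le_card
            intro e he
            simp only [Finset.mem_filter] at he
            rcases he.2 with ⟨hfalse, _⟩ | ⟨_, hnl⟩
            · by_contra heF
              simp [heF] at hfalse
            · exfalso
              apply hnl
              induction e using Sym2.ind with
              | _ a b => simp
        _ = K := hF.2
    exact le_trans (Nat.sInf_le ⟨fun _ => true, rfl⟩) hconst
  · -- Part 2
    by_cases hK0 : K = 0
    · subst hK0
      simp only [Nat.cast_zero, mul_zero, zero_div]
      apply div_nonneg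
      · apply Finset.sum_nonneg; intro F _
        apply Finset.sum_nonneg; intro ε _
        positivity
      · positivity
    obtain ⟨k, rfl⟩ := Nat.exists_eq_succ_of_ne_zero hK0
    simp only [Nat.succ_eq_add_one] at hK ⊢
    set E := G.edgeFinset with hE
    set m := E.card with hm
    set N := Fintype.card (Sym2 V → Bool) with hN
    -- Step 1: per-F lower bound
    have step1 : ∀ F ∈ E.powersetCard (k+1),
        ((E \ Q) ∩ F).card * N ≤
          2 * ∑ ε : Sym2 V → Bool, ((E \ Q).filter fun e =>
            A (fun e' => if e' ∈ F then ε e' else true) e ≠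
              (if e ∈ F then ε e else true)).card := by
      intro F hF
      have hswap : ∑ ε : Sym2 V → Bool, ((E \ Q).filter fun e =>
            A (fun e' => if e' ∈ F then ε e' else true) e ≠
              (if e ∈ F then ε e else true)).card
          = ∑ e ∈ E \ Q, (Finset.univ.filter fun ε : Sym2 V → Bool =>
              A (fun e' => if e' ∈ F then ε e' else true) e ≠
                (if e ∈ F then ε e else true)).card := by
        simp_rw [Finset.card_filter]
        rw [Finset.sum_comm]
      calc ((E \ Q) ∩ F).card * N
          = ∑ e ∈ (E \ Q) ∩ F, N := by rw [Finset.sum_const, smul_eq_mul]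
        _ = ∑ e ∈ (E \ Q) ∩ F, 2 * (Finset.univ.filter fun ε : Sym2 V → Bool =>
              A (fun e' => if e' ∈ F then ε e' else true) e ≠
                (if e ∈ F then ε e else true)).card := by
            apply Finset.sum_congr rfl
            intro e he
            rw [Finset.mem_inter, Finset.mem_sdiff] at he
            obtain ⟨⟨_, heQ⟩, heF⟩ := he
            have hcf : (Finset.univ.filter fun ε : Sym2 V → Bool =>
                  A (fun e' => if e' ∈ F then ε e' else true) e ≠
                    (if e ∈ F then ε e else true))
                = Finset.univ.filter fun ε : Sym2 V → Bool =>
                    (fun ε : Sym2 V → Bool =>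
                      A (fun e' => if e' ∈ F then ε e' else true) e) ε ≠ ε e := by
              apply Finset.filter_congr
              intro ε _
              simp [heF]
            rw [hcf]
            refine (flip_count e (fun ε : Sym2 V → Bool =>
                A (fun e' => if e' ∈ F then ε e' else true) e) ?_).symm
            intro ε
            have h := hA (fun e' => if e' ∈ F then Function.update ε e (!(ε e)) e' else true)
              (fun e' => if e' ∈ F then ε e' else true) ?_
            · exact congrFun h e
            · intro e' he'
              have hne : e' ≠ e := fun h => heQ (h ▸ he')
              simp [Function.update_of_ne hne]
        _ ≤ ∑ e ∈ E \ Q, 2 * (Finset.univ.filter fun ε : Sym2 V → Bool =>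
              A (fun e' => if e' ∈ F then ε e' else true) e ≠
                (if e ∈ F then ε e else true)).card := by
            exact Finset.sum_le_sum_of_subset Finset.inter_subset_left
        _ = 2 * ∑ e ∈ E \ Q, (Finset.univ.filter fun ε : Sym2 V → Bool =>
              A (fun e' => if e' ∈ F then ε e' else true) e ≠
                (if e ∈ F then ε e else true)).card := by rw [Finset.mul_sum]
        _ = _ := by rw [hswap]
    -- Step 2: counting identity
    have step2 : ∑ F ∈ E.powersetCard (k+1), ((E \ Q) ∩ F).card
        = (E \ Q).card * (m - 1).choose k := by
      have hcard : ∀ F : Finset (Sym2 V), ((E \ Q) ∩ F).card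
          = ∑ e ∈ E \ Q, if e ∈ F then 1 else 0 := by
        intro F
        rw [← Finset.filter_mem_eq_inter, Finset.card_filter]
      simp_rw [hcard]
      rw [Finset.sum_comm]
      have : ∀ e ∈ E \ Q, (∑ F ∈ E.powersetCard (k+1), if e ∈ F then 1 else 0)
          = (m - 1).choose k := by
        intro e he
        rw [← Finset.card_filter]
        exact count_contain E e (Finset.mem_sdiff.mp he).1 k
      rw [Finset.sum_congr rfl this, Finset.sum_const, smul_eq_mul]
    -- Combine in ℕ
    have hmain : (E \ Q).card * (m - 1).choose k * N ≤
        2 * ∑ F ∈ E.powersetCard (k+1), ∑ ε : Sym2 V → Bool,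
          ((E \ Q).filter fun e =>
            A (fun e' => if e' ∈ F then ε e' else true) e ≠
              (if e ∈ F then ε e else true)).card := by
      rw [← step2, Finset.sum_mul, Finset.mul_sum]
      exact Finset.sum_le_sum step1
    -- Final real arithmetic
    have hP : (E.powersetCard (k+1)).card = m.choose (k+1) := Finset.card_powersetCard _ _
    have hPpos : 0 < m.choose (k+1) := Nat.choose_pos hK
    have hNpos : 0 < N := Fintype.card_pos
    have hm1 : 1 ≤ m := le_trans (Nat.succ_le_succ (Nat.zero_le k)) hK
    have hid : (k+1) * m.choose (k+1) = m * (m - 1).choose k := by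
      obtain ⟨n, hn⟩ : ∃ n, m = n + 1 := ⟨m - 1, (Nat.succ_pred_eq_of_pos hm1).symm⟩
      rw [hn, Nat.add_sub_cancel]
      calc (k+1) * (n+1).choose (k+1) = (n+1).choose (k+1) * (k+1) := mul_comm _ _
        _ = (n+1) * n.choose k := (Nat.add_one_mul_choose_eq n k).symm
    have hD : ((E \ Q).card : ℝ) = (m : ℝ) - Q.card := by
      rw [Finset.card_sdiff_of_subset hQ]
      exact_mod_cast Nat.cast_sub (Finset.card_le_card hQ)
    rw [hP]
    rw [le_div_iff₀ (by positivity)]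
    have hmainR : ((E \ Q).card : ℝ) * ((m - 1).choose k : ℝ) * (N : ℝ) ≤
        2 * ∑ F ∈ E.powersetCard (k+1), ∑ ε : Sym2 V → Bool,
          (((E \ Q).filter fun e =>
            A (fun e' => if e' ∈ F then ε e' else true) e ≠
              (if e ∈ F then ε e else true)).card : ℝ) := by
      exact_mod_cast hmain
    have hidR : ((k:ℝ)+1) * (m.choose (k+1) : ℝ) = (m : ℝ) * ((m - 1).choose k : ℝ) := by
      exact_mod_cast hid
    have hC' : (0:ℝ) ≤ ((m - 1).choose k : ℝ) := Nat.cast_nonneg _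
    have hNR : (0:ℝ) ≤ (N : ℝ) := Nat.cast_nonneg _
    have h1 : (1 - α) * (m : ℝ) ≤ ((E \ Q).card : ℝ) := by
      rw [hD]; nlinarith
    have h2 : (1 - α) * ((k:ℝ)+1) * ((m.choose (k+1) : ℝ) * (N : ℝ)) ≤
        2 * ∑ F ∈ E.powersetCard (k+1), ∑ ε : Sym2 V → Bool,
          (((E \ Q).filter fun e =>
            A (fun e' => if e' ∈ F then ε e' else true) e ≠
              (if e ∈ F then ε e else true)).card : ℝ) := by
      have e1 : (1-α)*((k:ℝ)+1)*((m.choose (k+1):ℝ)*(N:ℝ))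
          = ((1-α)*(m:ℝ))*(((m-1).choose k:ℝ)*(N:ℝ)) := by
        linear_combination (1-α)*(N:ℝ)*hidR
      rw [e1]
      calc ((1-α)*(m:ℝ))*(((m-1).choose k:ℝ)*(N:ℝ))
          ≤ ((E \ Q).card:ℝ)*(((m-1).choose k:ℝ)*(N:ℝ)) :=
            mul_le_mul_of_nonneg_right h1 (mul_nonneg hC' hNR)
        _ = ((E \ Q).card:ℝ)*((m-1).choose k:ℝ)*(N:ℝ) := by ring
        _ ≤ _ := hmainR
    push_cast
    linarith [h2]
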